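/- Let G be a finite group, A ≤ G a subgroup, and B ≤ C ≤ G subgroups with C contained in the normalizer N_G(B). Then the set ACB = AC is a union of (A,B)-double cosets, and the number of distinct (A,B)-double cosets contained in AC equals [C : A ∩ C] / [B : A ∩ B]; equivalently, it equals |C/B| · |A ∩ B| / |A ∩ C|. -/

import Mathlib

open scoped Pointwise

/-!
STATEMENT 11: Let `G` be a finite group, `A ≤ G` a subgroup, and `B ≤ C ≤ G` subgroups with
`C ⊆ N_G(B)`.  Then `ACB = AC` is a union of `(A,B)`-double cosets, and the number of
distinct `(A,B)`-double cosets contained in `AC` equals `[C : A ∩ C] / [B : A ∩ B]`;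
equivalently, it equals `|C/B| · |A ∩ B| / |A ∩ C|`.
-/

lemma aux_fiber {α β : Type*} [Finite α] (f : α → β) (k : ℕ)
    (h : ∀ a, Nat.card {x // f x = f a} = k) :
    Nat.card (Set.range f) * k = Nat.card α := by
  classical
  haveI : Fintype α := Fintype.ofFinite α
  set s : Finset β := Finset.univ.image f with hs
  have hrange : Set.range f = ↑s := by
    ext y; simp [hs]
  have h1 : Nat.card (Set.range f) = s.card := by
    rw [hrange, Nat.card_coe_set_eq, Set.ncard_coe_finset]
  have h2 : (Finset.univ : Finset α).card
      = ∑ y ∈ s, (Finset.univ.filter (fun x => f x = y)).card :=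
    Finset.card_eq_sum_card_fiberwise (fun x _ => Finset.mem_image_of_mem f (Finset.mem_univ x))
  have h3 : ∀ y ∈ s, (Finset.univ.filter (fun x => f x = y)).card = k := by
    intro y hy
    obtain ⟨a, -, rfl⟩ := Finset.mem_image.mp hy
    rw [← h a, Nat.card_eq_fintype_card, Fintype.card_subtype]
  rw [h1, Nat.card_eq_fintype_card, ← Finset.card_univ, h2, Finset.sum_congr rfl h3,
    Finset.sum_const, smul_eq_mul]

lemma card_mul_inf{G : Type*} [Group G] [Finite G] (H K : Subgroup G) :
    Nat.card ((H : Set G) * (K : Set G)) * Nat.card ↥(H ⊓ K) = Nat.card H * Nat.card K := by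
  classical
  set m : H × K → G := fun p => (p.1 : G) * (p.2 : G) with hm
  have hrange : Set.range m = (H : Set G) * (K : Set G) := by
    ext g
    constructor
    · rintro ⟨⟨h, k⟩, rfl⟩
      exact Set.mul_mem_mul h.2 k.2
    · rintro ⟨h, hh, k, hk, rfl⟩
      exact ⟨⟨⟨h, hh⟩, ⟨k, hk⟩⟩, rfl⟩
  have hfib : ∀ p : H × K, Nat.card {q // m q = m p} = Nat.card ↥(H ⊓ K) := by
    rintro ⟨h, k⟩
    refine Nat.card_congr (Equiv.symm ?_)
    refine
      { toFun := fun d =>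
          ⟨(⟨(h : G) * d, mul_mem h.2 (Subgroup.mem_inf.mp d.2).1⟩,
            ⟨(d : G)⁻¹ * k, mul_mem (inv_mem (Subgroup.mem_inf.mp d.2).2) k.2⟩),
           by simp [hm, mul_assoc]⟩
        invFun := fun q =>
          ⟨(h : G)⁻¹ * q.1.1, Subgroup.mem_inf.mpr
            ⟨mul_mem (inv_mem h.2) q.1.1.2, by
              have hq' : (q.1.1 : G) * q.1.2 = (h : G) * k := q.2
              have e : (h : G)⁻¹ * q.1.1 = (k : G) * (q.1.2 : G)⁻¹ :=
                eq_mul_inv_iff_mul_eq.mpr (by rw [mul_assoc, hq', inv_mul_cancel_left])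
              rw [e]
              exact mul_mem k.2 (inv_mem q.1.2.2)⟩⟩
        left_inv := fun d => by
          ext
          simp
        right_inv := fun q => by
          have hq' : (q.1.1 : G) * q.1.2 = (h : G) * k := q.2
          ext
          · simp
          · show ((h : G)⁻¹ * q.1.1)⁻¹ * k = (q.1.2 : G)
            rw [mul_inv_rev, inv_inv, mul_assoc, ← hq', inv_mul_cancel_left] }
  have key := aux_fiber m (Nat.card ↥(H ⊓ K)) hfib
  rw [hrange] at key
  rw [key, Nat.card_prod]

theorem card_double_cosets_in_AC
    {G : Type*} [Group G] [Finite G] (A B C : Subgroup G)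
    (hBC : B ≤ C) (hnorm : C ≤ Subgroup.normalizer (B : Set G)) :
    (∀ w ∈ (A : Set G) * (C : Set G),
        (A : Set G) * {w} * (B : Set G) ⊆ (A : Set G) * (C : Set G)) ∧
      Nat.card {s : Set G | ∃ c ∈ C, s = (A : Set G) * {c} * (B : Set G)} =
        A.relIndex C / A.relIndex B ∧
      Nat.card {s : Set G | ∃ c ∈ C, s = (A : Set G) * {c} * (B : Set G)} =
        B.relIndex C * Nat.card ↥(A ⊓ B) / Nat.card ↥(A ⊓ C) := by
  constructor
  · rintro w ⟨a, ha, c, hc, rfl⟩ x ⟨y, ⟨a₁, ha₁, w', hw', rfl⟩, b, hb, rfl⟩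
    have hw'' : w' = a * c := hw'
    subst hw''
    exact ⟨a₁ * a, mul_mem ha₁ ha, c * b, mul_mem hc (hBC hb), by group⟩
  · -- swap lemma
    have swap : ∀ g : G, g ∈ C → ({g} : Set G) * (B : Set G) = (B : Set G) * {g} := by
      intro g hg
      have hgn := hnorm hg
      ext x
      simp only [Set.singleton_mul, Set.mul_singleton, Set.mem_image, SetLike.mem_coe]
      constructor
      · rintro ⟨b, hb, rfl⟩
        exact ⟨g * b * g⁻¹, (Subgroup.mem_normalizer_iff.mp hgn b).mp hb, by group⟩
      · rintro ⟨b, hb, rfl⟩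
        exact ⟨g⁻¹ * b * g, (Subgroup.mem_normalizer_iff''.mp hgn b).mp hb, by group⟩
    set f : C → Set G := fun c => (A : Set G) * {(c : G)} * (B : Set G) with hf
    have L : ∀ x y : C, f (x * y) = f x * {(y : G)} := by
      intro x y
      show (A : Set G) * {((x : G) * (y : G))} * B = (A : Set G) * {(x : G)} * B * {(y : G)}
      rw [← Set.singleton_mul_singleton, ← mul_assoc, mul_assoc ((A : Set G) * {(x : G)}),
        swap (y : G) y.2, ← mul_assoc]
    have hf1 : f 1 = (A : Set G) * (B : Set G) := by
      show (A : Set G) * {(1 : G)} * B = _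
      rw [Set.singleton_one, mul_one]
    have hmemf : ∀ x : C, f x = f 1 ↔ (x : G) ∈ (A : Set G) * (B : Set G) := by
      intro x
      constructor
      · intro h
        rw [← hf1, ← h]
        have : (1 : G) * x * 1 ∈ (A : Set G) * {(x : G)} * B :=
          Set.mul_mem_mul (Set.mul_mem_mul A.one_mem rfl) B.one_mem
        rwa [one_mul, mul_one] at this
      · rintro ⟨a, ha, b, hb, hab⟩
        rw [hf1]
        show (A : Set G) * {(x : G)} * B = _
        rw [← hab, ← Set.singleton_mul_singleton, ← mul_assoc, mul_assoc ((A : Set G) * {a}),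
          Subgroup.singleton_mul_subgroup hb, Subgroup.subgroup_mul_singleton ha]
    -- constant fibers
    set k : ℕ := Nat.card {x : C // f x = f 1} with hk
    have hconst : ∀ c : C, Nat.card {x : C // f x = f c} = k := by
      intro c
      refine Nat.card_congr ?_
      refine
        { toFun := fun x => ⟨x.1 * c⁻¹, by
            have h1 : f (x.1 * c⁻¹) = f (c * c⁻¹) := by rw [L, L, x.2]
            simpa using h1⟩
          invFun := fun y => ⟨y.1 * c, by
            have h1 : f (y.1 * c) = f (1 * c) := by rw [L, L, y.2]
            simpa using h1⟩
          left_inv := fun x => by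
            ext
            simp [mul_assoc]
          right_inv := fun y => by
            ext
            simp [mul_assoc] }
    have key1 : Nat.card (Set.range f) * k = Nat.card C := aux_fiber f k hconst
    -- identify the set S with the range of f
    have hS : {s : Set G | ∃ c ∈ C, s = (A : Set G) * {c} * (B : Set G)} = Set.range f := by
      ext s
      constructor
      · rintro ⟨c, hc, rfl⟩
        exact ⟨⟨c, hc⟩, rfl⟩
      · rintro ⟨c, rfl⟩
        exact ⟨(c : G), c.2, rfl⟩
    -- identify fibers over f 1 with (A ⊓ C) * B
    have memC : ∀ g : G, g ∈ ((A ⊓ C : Subgroup G) : Set G) * (B : Set G) → g ∈ C := by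
      rintro g ⟨a, ha, b, hb, rfl⟩
      exact mul_mem ha.2 (hBC hb)
    have fwd : ∀ x : C, f x = f 1 → (x : G) ∈ ((A ⊓ C : Subgroup G) : Set G) * (B : Set G) := by
      intro x hx
      obtain ⟨a, ha, b, hb, hab⟩ := (hmemf x).mp hx
      have haC : a ∈ C := by
        have : a = (x : G) * b⁻¹ := by rw [← hab]; group
        rw [this]
        exact mul_mem x.2 (inv_mem (hBC hb))
      exact ⟨a, ⟨ha, haC⟩, b, hb, hab⟩
    have bwd : ∀ g : G, g ∈ ((A ⊓ C : Subgroup G) : Set G) * (B : Set G) →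
        (g ∈ (A : Set G) * (B : Set G)) := by
      rintro g ⟨a, ha, b, hb, rfl⟩
      exact Set.mul_mem_mul ha.1 hb
    have hkcard : k = Nat.card ↥(((A ⊓ C : Subgroup G) : Set G) * (B : Set G)) := by
      refine Nat.card_congr ?_
      exact
        { toFun := fun x => ⟨(x.1 : G), fwd x.1 x.2⟩
          invFun := fun g => ⟨⟨g.1, memC g.1 g.2⟩, (hmemf _).mpr (bwd g.1 g.2)⟩
          left_inv := fun x => by ext; rfl
          right_inv := fun g => by ext; rfl }
    have hinf : (A ⊓ C) ⊓ B = A ⊓ B := by rw [inf_assoc, inf_eq_right.mpr hBC]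
    have key2 : k * Nat.card ↥(A ⊓ B) = Nat.card ↥(A ⊓ C) * Nat.card B := by
      rw [hkcard, ← hinf]
      exact card_mul_inf (A ⊓ C) B
    -- relindex facts
    have cardsub : ∀ D E : Subgroup G, D ≤ E → Nat.card (D.subgroupOf E) = Nat.card D := by
      intro D E h
      exact Nat.card_congr (Subgroup.subgroupOfEquivOfLe h).toEquiv
    have hrelAC : A.relIndex C * Nat.card ↥(A ⊓ C) = Nat.card C := by
      have h1 := Subgroup.card_mul_index (A.subgroupOf C)
      rw [← Subgroup.inf_subgroupOf_right A C, cardsub _ _ inf_le_right] at h1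
      rw [Subgroup.relIndex, ← Subgroup.inf_subgroupOf_right A C, mul_comm]
      exact h1
    have hrelAB : A.relIndex B * Nat.card ↥(A ⊓ B) = Nat.card B := by
      have h1 := Subgroup.card_mul_index (A.subgroupOf B)
      rw [← Subgroup.inf_subgroupOf_right A B, cardsub _ _ inf_le_right] at h1
      rw [Subgroup.relIndex, ← Subgroup.inf_subgroupOf_right A B, mul_comm]
      exact h1
    have hrelBC : B.relIndex C * Nat.card B = Nat.card C := by
      have h1 := Subgroup.card_mul_index (B.subgroupOf C)
      rw [cardsub _ _ hBC] at h1
      rw [Subgroup.relIndex, mul_comm]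
      exact h1
    -- positivity
    have pAB : 0 < Nat.card ↥(A ⊓ B) := Nat.card_pos
    have pAC : 0 < Nat.card ↥(A ⊓ C) := Nat.card_pos
    have pB : 0 < Nat.card B := Nat.card_pos
    have prelB : 0 < A.relIndex B := by
      rcases Nat.eq_zero_or_pos (A.relIndex B) with h | h
      · rw [h, zero_mul] at hrelAB
        omega
      · exact h
    have step1 : k = Nat.card ↥(A ⊓ C) * A.relIndex B := by
      have h2 : k * Nat.card ↥(A ⊓ B)
          = (Nat.card ↥(A ⊓ C) * A.relIndex B) * Nat.card ↥(A ⊓ B) := by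
        rw [key2, ← hrelAB]; ring
      exact Nat.eq_of_mul_eq_mul_right pAB h2
    have step2 : Nat.card (Set.range f) * A.relIndex B = A.relIndex C := by
      have h2 : (Nat.card (Set.range f) * A.relIndex B) * Nat.card ↥(A ⊓ C)
          = A.relIndex C * Nat.card ↥(A ⊓ C) := by
        rw [hrelAC, ← key1, step1]; ring
      exact Nat.eq_of_mul_eq_mul_right pAC h2
    have step3 : Nat.card (Set.range f) * Nat.card ↥(A ⊓ C)
        = B.relIndex C * Nat.card ↥(A ⊓ B) := by
      have h2 : (Nat.card (Set.range f) * Nat.card ↥(A ⊓ C)) * Nat.card B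
          = (B.relIndex C * Nat.card ↥(A ⊓ B)) * Nat.card B := by
        calc Nat.card (Set.range f) * Nat.card ↥(A ⊓ C) * Nat.card B
            = Nat.card (Set.range f) * (Nat.card ↥(A ⊓ C) * Nat.card B) := by ring
          _ = Nat.card (Set.range f) * (k * Nat.card ↥(A ⊓ B)) := by rw [key2]
          _ = (Nat.card (Set.range f) * k) * Nat.card ↥(A ⊓ B) := by ring
          _ = Nat.card C * Nat.card ↥(A ⊓ B) := by rw [key1]
          _ = (B.relIndex C * Nat.card B) * Nat.card ↥(A ⊓ B) := by rw [hrelBC]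
          _ = (B.relIndex C * Nat.card ↥(A ⊓ B)) * Nat.card B := by ring
      exact Nat.eq_of_mul_eq_mul_right pB h2
    constructor
    · rw [hS, ← step2, Nat.mul_div_cancel _ prelB]
    · rw [hS, ← step3, Nat.mul_div_cancel _ pAC]
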